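/- The cyclic subgroup commutativity degree of ℤ₂ × Q_{2^{m+1}} tends to 0 as m → ∞; that is, the real sequence m ↦ N₁(m)/T₁(m)², where N₁(m) is the number of ordered pairs (H,K) of cyclic subgroups of ℤ₂ × Q_{2^{m+1}} with HK = KH and T₁(m) is the number of cyclic subgroups of ℤ₂ × Q_{2^{m+1}}, converges to 0. -/

import Mathlib

set_option linter.unusedSectionVars false
set_option linter.unreachableTactic false
set_option linter.unusedTactic false
set_option maxHeartbeats 1000000


open Pointwise

/-- `ℤ₂ × Q_{2^{m+1}}`, the direct product of the cyclic group of order 2 and the generalized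
quaternion group of order `2^{m+1}`. -/
abbrev Z2ProdQuaternion (m : ℕ) : Type :=
  Multiplicative (ZMod 2) × QuaternionGroup (2 ^ (m - 1))

/-- The number of ordered pairs of permuting cyclic subgroups of `ℤ₂ × Q_{2^{m+1}}`. -/
noncomputable def cyclicPermutingPairs (m : ℕ) : ℕ :=
  Nat.card {p : Subgroup (Z2ProdQuaternion m) × Subgroup (Z2ProdQuaternion m) //
    IsCyclic p.1 ∧ IsCyclic p.2 ∧
      (p.1 : Set (Z2ProdQuaternion m)) * (p.2 : Set (Z2ProdQuaternion m)) =
        (p.2 : Set (Z2ProdQuaternion m)) * (p.1 : Set (Z2ProdQuaternion m))}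

/-- The number of cyclic subgroups of `ℤ₂ × Q_{2^{m+1}}`. -/
noncomputable def numCyclicSubgroups (m : ℕ) : ℕ :=
  Nat.card {H : Subgroup (Z2ProdQuaternion m) // IsCyclic H}

open Subgroup QuaternionGroup

abbrev Z2 := Multiplicative (ZMod 2)

lemma Z2.sq : ∀ b : Z2, b * b = 1 := by decide

lemma Z2.eq_one_or : ∀ b : Z2, b = 1 ∨ b = Multiplicative.ofAdd 1 := by decide

section Quat
variable {n : ℕ} [NeZero n]

instance : NeZero (2 * n) := ⟨by have := NeZero.pos n; omega⟩

lemma a_zpow (k : ℤ) : (a 1 : QuaternionGroup n) ^ k = a (k : ZMod (2 * n)) := by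
  cases k with
  | ofNat l => simp [a_one_pow]
  | negSucc l =>
      rw [zpow_negSucc, a_one_pow]
      rw [Int.cast_negSucc]
      apply inv_eq_of_mul_eq_one_left
      rw [a_mul_a]
      push_cast
      rw [neg_add_cancel, one_def]

lemma exists_a_of_mem_zpowers {q : QuaternionGroup n} (h : q ∈ zpowers (a 1)) :
    ∃ j, q = a j := by
  obtain ⟨k, hk⟩ := h
  have hk' : (a 1 : QuaternionGroup n) ^ k = q := hk
  exact ⟨_, (hk'.symm.trans (a_zpow k))⟩

lemma a_mem_zpowers (j : ZMod (2 * n)) : (a j : QuaternionGroup n) ∈ zpowers (a 1) :=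
  ⟨((j.val : ℕ) : ℤ), by
    show (a 1 : QuaternionGroup n) ^ ((j.val : ℕ) : ℤ) = a j
    rw [zpow_natCast, a_one_pow, ZMod.natCast_zmod_val]⟩

/-- The abelian "rotation" subgroup `ℤ₂ × ⟨a⟩`. -/
def Rsub (n : ℕ) : Subgroup (Z2 × QuaternionGroup n) :=
  (⊤ : Subgroup Z2).prod (zpowers (a 1))

lemma mem_Rsub_iff {x : Z2 × QuaternionGroup n} : x ∈ Rsub n ↔ ∃ j, x.2 = a j := by
  constructor
  · rintro ⟨-, hx⟩
    exact exists_a_of_mem_zpowers hx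
  · rintro ⟨j, hj⟩
    exact ⟨trivial, hj ▸ a_mem_zpowers j⟩

lemma neg_n : -((n : ZMod (2 * n))) = (n : ZMod (2 * n)) := by
  have h : ((2 * n : ℕ) : ZMod (2 * n)) = 0 := ZMod.natCast_self _
  push_cast at h
  linear_combination -h

lemma n_add_n : ((n : ZMod (2 * n))) + n = 0 := by
  have h : ((2 * n : ℕ) : ZMod (2 * n)) = 0 := ZMod.natCast_self _
  push_cast at h
  linear_combination h

lemma xa_pair_sq (b : Z2) (i : ZMod (2 * n)) :
    ((b, xa i) : Z2 × QuaternionGroup n) ^ 2 = (1, a n) := by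
  ext
  · simp [pow_two, Z2.sq]
  · simp [pow_two]

lemma xa_pair_cube (b : Z2) (i : ZMod (2 * n)) :
    ((b, xa i) : Z2 × QuaternionGroup n) ^ 3 = (b, xa (i + (n : ZMod (2 * n)))) := by
  rw [show (3:ℕ) = 2+1 from rfl, pow_succ, xa_pair_sq]
  ext
  · simp
  · simp only [Prod.mk_mul_mk, a_mul_xa]
    rw [sub_eq_add_neg, neg_n, add_comm]

lemma xa_pair_pow_four (b : Z2) (i : ZMod (2 * n)) :
    ((b, xa i) : Z2 × QuaternionGroup n) ^ 4 = 1 := by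
  rw [show (4:ℕ) = 2*2 from rfl, pow_mul, xa_pair_sq]
  ext
  · simp
  · simp only [Prod.pow_snd, Prod.snd_one]
    rw [pow_two, a_mul_a, n_add_n, one_def]

lemma mem_zpowers_xa_pair {b : Z2} {i : ZMod (2 * n)} {x : Z2 × QuaternionGroup n}
    (hx : x ∈ zpowers ((b, xa i) : Z2 × QuaternionGroup n)) :
    x = 1 ∨ x = (b, xa i) ∨ x = (1, a n) ∨ x = (b, xa (i + (n : ZMod (2 * n)))) := by
  obtain ⟨k, hk⟩ := hx
  set g : Z2 × QuaternionGroup n := (b, xa i) with hg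
  have hk : g ^ k = x := hk
  have h4 : g ^ (4 : ℤ) = 1 := by
    rw [show (4:ℤ) = ((4:ℕ):ℤ) by norm_num, zpow_natCast, xa_pair_pow_four]
  have hmod : g ^ k = g ^ (k % 4) := by
    conv_lhs => rw [← Int.emod_add_mul_ediv k 4]
    rw [zpow_add, zpow_mul, h4, one_zpow, mul_one]
  have h0 : 0 ≤ k % 4 := Int.emod_nonneg k (by norm_num)
  have h1 : k % 4 < 4 := Int.emod_lt_of_pos k (by norm_num)
  set r := k % 4 with hr
  interval_cases r
  · left; rw [← hk, hmod, zpow_zero]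
  · right; left; rw [← hk, hmod, zpow_one]
  · right; right; left
    rw [← hk, hmod, show ((2:ℤ)) = ((2:ℕ):ℤ) by norm_num, zpow_natCast, xa_pair_sq]
  · right; right; right
    rw [← hk, hmod, show ((3:ℤ)) = ((3:ℕ):ℤ) by norm_num, zpow_natCast, xa_pair_cube]
end Quat

open Subgroup

variable {G : Type*} [Group G]

lemma zpowers_pow_gcd (z : G) (p : ℕ) :
    zpowers (z ^ p) = zpowers (z ^ Nat.gcd (orderOf z) p) := by
  set N := orderOf z
  apply le_antisymm
  · rw [zpowers_le]
    obtain ⟨t, ht⟩ := Nat.gcd_dvd_right N p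
    have hzp : z ^ p = (z ^ Nat.gcd N p) ^ t := by rw [← pow_mul, ← ht]
    rw [hzp]
    exact Subgroup.pow_mem _ (mem_zpowers (z ^ Nat.gcd N p)) t
  · rw [zpowers_le]
    have hb := Nat.gcd_eq_gcd_ab N p
    have : z ^ ((Nat.gcd N p : ℤ)) = (z ^ p) ^ (Nat.gcdB N p) := by
      rw [hb, zpow_add, zpow_mul, zpow_mul, zpow_natCast, zpow_natCast, pow_orderOf_eq_one,
        one_zpow, one_mul]
    have : z ^ Nat.gcd N p = (z ^ p) ^ (Nat.gcdB N p) := by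
      rw [← this, zpow_natCast]
    rw [this]
    exact Subgroup.zpow_mem _ (mem_zpowers (z ^ p)) _

lemma zpowers_eq_zpowers_of_orderOf_eq [Finite G] {z x y : G}
    (hx : x ∈ zpowers z) (hy : y ∈ zpowers z) (h : orderOf x = orderOf y) :
    zpowers x = zpowers y := by
  obtain ⟨p, hp⟩ := mem_powers_iff_mem_zpowers.2 hx
  obtain ⟨q, hq⟩ := mem_powers_iff_mem_zpowers.2 hy
  subst hp hq
  have hN : orderOf z ≠ 0 := (orderOf_pos z).ne'
  rw [orderOf_pow, orderOf_pow] at h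
  have hgcd : Nat.gcd (orderOf z) p = Nat.gcd (orderOf z) q := by
    have h1 : Nat.gcd (orderOf z) p ∣ orderOf z := Nat.gcd_dvd_left _ _
    have h2 : Nat.gcd (orderOf z) q ∣ orderOf z := Nat.gcd_dvd_left _ _
    rw [← Nat.div_div_self h1 hN, ← Nat.div_div_self h2 hN, h]
  rw [zpowers_pow_gcd z p, zpowers_pow_gcd z q, hgcd]

section CD
open Subgroup QuaternionGroup

lemma subgroup_eq_zpowers {G : Type*} [Group G] (H : Subgroup G) (h : IsCyclic H) :
    ∃ g : G, H = zpowers g := by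
  obtain ⟨⟨g, hg⟩, hgen⟩ := h.exists_generator
  refine ⟨g, le_antisymm (fun x hx => ?_) ((zpowers_le).2 hg)⟩
  obtain ⟨k, hk⟩ := hgen ⟨x, hx⟩
  exact ⟨k, congrArg Subtype.val hk⟩

variable {n : ℕ} [NeZero n]

lemma zpowers_a_pair_le_Rsub (b : Z2) (i : ZMod (2 * n)) :
    zpowers ((b, a i) : Z2 × QuaternionGroup n) ≤ Rsub n :=
  zpowers_le.2 (mem_Rsub_iff.2 ⟨i, rfl⟩)

lemma zpowers_xa_pair_not_le_Rsub (b : Z2) (i : ZMod (2 * n)) :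
    ¬ zpowers ((b, xa i) : Z2 × QuaternionGroup n) ≤ Rsub n := by
  intro h
  obtain ⟨j, hj⟩ := mem_Rsub_iff.1 (h (mem_zpowers _))
  simp at hj

lemma classify (H : Subgroup (Z2 × QuaternionGroup n)) (h : IsCyclic H) :
    H ≤ Rsub n ∨ ∃ (b : Z2) (i : ZMod (2 * n)), H = zpowers ((b, xa i) : Z2 × QuaternionGroup n) := by
  obtain ⟨⟨b, q⟩, rfl⟩ := subgroup_eq_zpowers H h
  cases q with
  | a i => exact Or.inl (zpowers_a_pair_le_Rsub b i)
  | xa i => exact Or.inr ⟨b, i, rfl⟩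

lemma Z2.zpow_even (b : Z2) {k : ℤ} (h : (2:ℤ) ∣ k) : b ^ k = 1 := by
  obtain ⟨t, rfl⟩ := h
  rw [zpow_mul]
  rw [show b ^ (2:ℤ) = b * b by rw [show (2:ℤ) = ((2:ℕ):ℤ) by norm_num, zpow_natCast, pow_two]]
  rw [Z2.sq, one_zpow]

lemma Z2.zpow_odd (b : Z2) {k : ℤ} (h : ¬ (2:ℤ) ∣ k) : b ^ k = b := by
  have h2 : (2:ℤ) ∣ (k - 1) := by omega
  calc b ^ k = b ^ (k - 1) * b ^ (1:ℤ) := by rw [← zpow_add]; ring_nf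
  _ = b := by rw [Z2.zpow_even b h2, one_mul, zpow_one]

lemma orderOf_ofAdd_one : orderOf ((Multiplicative.ofAdd 1 : Z2)) = 2 := by
  haveI : Fact (Nat.Prime 2) := ⟨Nat.prime_two⟩
  apply orderOf_eq_prime
  · decide
  · decide

/-- members of a subgroup contained in `Rsub` with trivial first coordinates -/
lemma zpowers_one_pair_le {q q' : QuaternionGroup n} (h : q' ∈ zpowers q) :
    (((1 : Z2), q') : Z2 × QuaternionGroup n) ∈ zpowers (((1:Z2), q) : Z2 × QuaternionGroup n) := by
  obtain ⟨t, ht⟩ := h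
  exact ⟨t, Prod.ext (by simp) ht⟩

/-- The number of cyclic subgroups contained in the rotation subgroup is at most `4 * (e + 3)`,
when `2 * n = 2 ^ e`. -/
lemma card_cyclicR_le (e : ℕ) (hne : 2 * n = 2 ^ e) :
    Nat.card {H : Subgroup (Z2 × QuaternionGroup n) // IsCyclic H ∧ H ≤ Rsub n}
      ≤ 4 * (e + 3) := by
  classical
  have hGcard : Nat.card (Z2 × QuaternionGroup n) = 2 ^ (e + 2) := by
    rw [Nat.card_prod, Nat.card_eq_fintype_card, Nat.card_eq_fintype_card,
      QuaternionGroup.card]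
    have : Fintype.card Z2 = 2 := rfl
    rw [this]
    rw [show 4 * n = 2 * (2 * n) by ring, hne]
    ring
  -- the invariant map
  set Φ : {H : Subgroup (Z2 × QuaternionGroup n) // IsCyclic H ∧ H ≤ Rsub n} →
      Fin (e + 3) × Prop × Prop := fun ⟨H, _, _⟩ =>
    (⟨Nat.log 2 (Nat.card H), by
      have hdvd : Nat.card H ∣ 2 ^ (e + 2) := hGcard ▸ Subgroup.card_subgroup_dvd_card H
      obtain ⟨j, hj, hcard⟩ := (Nat.dvd_prime_pow Nat.prime_two).1 hdvd
      rw [hcard, Nat.log_pow (by norm_num)]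
      omega⟩,
      ((Multiplicative.ofAdd 1, (1 : QuaternionGroup n)) ∈ H),
      (∀ x ∈ H, x.1 = (1 : Z2))) with hΦ
  have hinj : Function.Injective Φ := by
    rintro ⟨H, hc, hR⟩ ⟨H', hc', hR'⟩ heq
    simp only [hΦ, Prod.mk.injEq, Fin.mk.injEq] at heq
    obtain ⟨hlog, hT, hU⟩ := heq
    -- recover card equality
    have hcard : Nat.card H = Nat.card H' := by
      obtain ⟨j, hj, hcard⟩ := (Nat.dvd_prime_pow Nat.prime_two).1
        (hGcard ▸ Subgroup.card_subgroup_dvd_card H)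
      obtain ⟨j', hj', hcard'⟩ := (Nat.dvd_prime_pow Nat.prime_two).1
        (hGcard ▸ Subgroup.card_subgroup_dvd_card H')
      rw [hcard, hcard'] at hlog ⊢
      rw [Nat.log_pow (by norm_num), Nat.log_pow (by norm_num)] at hlog
      rw [hlog]
    -- generators
    obtain ⟨g, rfl⟩ := subgroup_eq_zpowers H hc
    obtain ⟨g', rfl⟩ := subgroup_eq_zpowers H' hc'
    obtain ⟨i, hi⟩ := mem_Rsub_iff.1 (hR (mem_zpowers g))
    obtain ⟨i', hi'⟩ := mem_Rsub_iff.1 (hR' (mem_zpowers g'))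
    obtain ⟨b, q⟩ := g
    obtain ⟨b', q'⟩ := g'
    simp only at hi hi'
    subst hi hi'
    congr 1
    -- order divisibility facts
    have hOdvd : orderOf (a i : QuaternionGroup n) ∣ 2 ^ e := by
      rw [← hne, ← orderOf_a_one (n := n)]
      exact orderOf_dvd_of_mem_zpowers (a_mem_zpowers i)
    have hOdvd' : orderOf (a i' : QuaternionGroup n) ∣ 2 ^ e := by
      rw [← hne, ← orderOf_a_one (n := n)]
      exact orderOf_dvd_of_mem_zpowers (a_mem_zpowers i')
    by_cases hu : ∀ x ∈ zpowers ((b, a i) : Z2 × QuaternionGroup n), x.1 = (1 : Z2)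
    · have hu' : ∀ x ∈ zpowers ((b', a i') : Z2 × QuaternionGroup n), x.1 = (1 : Z2) := by
        rw [← hU]; exact hu
      have hb : b = 1 := hu _ (mem_zpowers _)
      have hb' : b' = 1 := hu' _ (mem_zpowers _)
      subst hb hb'
      have ho : ∀ j : ZMod (2 * n), Nat.card (zpowers (((1:Z2), (a j : QuaternionGroup n)) :
          Z2 × QuaternionGroup n)) = orderOf (a j : QuaternionGroup n) := by
        intro j
        rw [Nat.card_zpowers, Prod.orderOf_mk, orderOf_one, Nat.lcm_one_left]
      have hOO : orderOf (a i : QuaternionGroup n) = orderOf (a i' : QuaternionGroup n) := by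
        rw [← ho i, ← ho i', hcard]
      have hzz := zpowers_eq_zpowers_of_orderOf_eq (a_mem_zpowers i) (a_mem_zpowers i') hOO
      apply le_antisymm
      · rw [zpowers_le]
        exact zpowers_one_pair_le (hzz ▸ mem_zpowers (a i))
      · rw [zpowers_le]
        exact zpowers_one_pair_le (hzz.symm ▸ mem_zpowers (a i'))
    · have hu' : ¬ ∀ x ∈ zpowers ((b', a i') : Z2 × QuaternionGroup n), x.1 = (1 : Z2) := by
        rw [← hU]; exact hu
      have hb : b = Multiplicative.ofAdd 1 := by
        rcases Z2.eq_one_or b with h1 | h1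
        · subst h1
          exfalso; apply hu
          rintro x ⟨k, rfl⟩
          exact one_zpow k
        · exact h1
      have hb' : b' = Multiplicative.ofAdd 1 := by
        rcases Z2.eq_one_or b' with h1 | h1
        · subst h1
          exfalso; apply hu'
          rintro x ⟨k, rfl⟩
          exact one_zpow k
        · exact h1
      subst hb hb'
      have key : ∀ j : ZMod (2 * n), orderOf (a j : QuaternionGroup n) ∣ 2 ^ e →
          ((Multiplicative.ofAdd 1, (1 : QuaternionGroup n)) : Z2 × QuaternionGroup n) ∈
            zpowers ((Multiplicative.ofAdd 1, a j) : Z2 × QuaternionGroup n) →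
          (a j : QuaternionGroup n) = 1 := by
        intro j hdvd hmem
        obtain ⟨k, hk⟩ := hmem
        have hk : ((Multiplicative.ofAdd 1, a j) : Z2 × QuaternionGroup n) ^ k
            = (Multiplicative.ofAdd 1, (1 : QuaternionGroup n)) := hk
        have hfst : (Multiplicative.ofAdd 1 : Z2) ^ k = Multiplicative.ofAdd 1 :=
          congrArg Prod.fst hk
        have hsnd : (a j : QuaternionGroup n) ^ k = 1 := congrArg Prod.snd hk
        have hkodd : ¬ (2:ℤ) ∣ k := by
          intro h2
          rw [Z2.zpow_even _ h2] at hfst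
          exact absurd hfst.symm (by decide)
        have hOk : (orderOf (a j : QuaternionGroup n) : ℤ) ∣ k :=
          orderOf_dvd_iff_zpow_eq_one.2 hsnd
        obtain ⟨jj, hjj, hOeq⟩ := (Nat.dvd_prime_pow Nat.prime_two).1 hdvd
        rcases Nat.eq_zero_or_pos jj with h0 | hpos
        · rw [← orderOf_eq_one_iff, hOeq, h0, pow_zero]
        · exfalso
          apply hkodd
          refine dvd_trans ?_ hOk
          have h2O : (2:ℕ) ∣ orderOf (a j : QuaternionGroup n) := by
            rw [hOeq]; exact dvd_pow_self 2 hpos.ne'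
          exact_mod_cast Int.natCast_dvd_natCast.2 h2O
      by_cases hTT : ((Multiplicative.ofAdd 1, (1 : QuaternionGroup n)) : Z2 × QuaternionGroup n) ∈
          zpowers ((Multiplicative.ofAdd 1, a i) : Z2 × QuaternionGroup n)
      · have hTT' : ((Multiplicative.ofAdd 1, (1 : QuaternionGroup n)) : Z2 × QuaternionGroup n) ∈
            zpowers ((Multiplicative.ofAdd 1, a i') : Z2 × QuaternionGroup n) := hT ▸ hTT
        rw [key i hOdvd hTT, key i' hOdvd' hTT']
      · have hTT' : ¬ ((Multiplicative.ofAdd 1, (1 : QuaternionGroup n)) : Z2 × QuaternionGroup n) ∈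
            zpowers ((Multiplicative.ofAdd 1, a i') : Z2 × QuaternionGroup n) := by
          rw [← hT]; exact hTT
        -- orders are even
        have heven : ∀ j : ZMod (2 * n), orderOf (a j : QuaternionGroup n) ∣ 2 ^ e →
            ¬ ((Multiplicative.ofAdd 1, (1 : QuaternionGroup n)) : Z2 × QuaternionGroup n) ∈
              zpowers ((Multiplicative.ofAdd 1, a j) : Z2 × QuaternionGroup n) →
            2 ∣ orderOf (a j : QuaternionGroup n) := by
          intro j hdvd hmem
          obtain ⟨jj, hjj, hOeq⟩ := (Nat.dvd_prime_pow Nat.prime_two).1 hdvd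
          rcases Nat.eq_zero_or_pos jj with h0 | hpos
          · exfalso
            apply hmem
            have : (a j : QuaternionGroup n) = 1 := by
              rw [← orderOf_eq_one_iff, hOeq, h0, pow_zero]
            rw [this]
            exact mem_zpowers _
          · rw [hOeq]
            exact dvd_pow_self 2 hpos.ne'
        have h2i := heven i hOdvd hTT
        have h2i' := heven i' hOdvd' hTT'
        have hcardO : ∀ j : ZMod (2 * n), 2 ∣ orderOf (a j : QuaternionGroup n) →
            Nat.card (zpowers ((Multiplicative.ofAdd 1, a j) : Z2 × QuaternionGroup n))
              = orderOf (a j : QuaternionGroup n) := by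
          intro j h2
          rw [Nat.card_zpowers, Prod.orderOf_mk, orderOf_ofAdd_one]
          exact Nat.dvd_antisymm (Nat.lcm_dvd h2 dvd_rfl) (Nat.dvd_lcm_right _ _)
        have hOO : orderOf (a i : QuaternionGroup n) = orderOf (a i' : QuaternionGroup n) := by
          rw [← hcardO i h2i, ← hcardO i' h2i', hcard]
        have hzz := zpowers_eq_zpowers_of_orderOf_eq (a_mem_zpowers i) (a_mem_zpowers i') hOO
        obtain ⟨t, ht⟩ : (a i' : QuaternionGroup n) ∈ zpowers (a i : QuaternionGroup n) :=
          hzz ▸ mem_zpowers _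
        have ht : (a i : QuaternionGroup n) ^ t = a i' := ht
        -- the exponent is odd
        have hsodd : ¬ (2:ℤ) ∣ t := by
          intro h2t
          obtain ⟨u, rfl⟩ := h2t
          obtain ⟨d, hd⟩ := h2i
          have hO'pos : 0 < orderOf (a i' : QuaternionGroup n) := orderOf_pos _
          have h1 : (a i' : QuaternionGroup n) ^ (d:ℤ) = 1 := by
            rw [← ht, ← zpow_mul]
            have hexp : (2*u) * (d:ℤ) = (orderOf (a i : QuaternionGroup n) : ℤ) * u := by
              rw [hd]; push_cast; ring
            rw [hexp, zpow_mul, zpow_natCast, pow_orderOf_eq_one, one_zpow]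
          have h3 : orderOf (a i' : QuaternionGroup n) ∣ d :=
            Int.natCast_dvd_natCast.1 (orderOf_dvd_iff_zpow_eq_one.2 h1)
          have hdpos : 0 < d := by omega
          have h4 : orderOf (a i' : QuaternionGroup n) ≤ d := Nat.le_of_dvd hdpos h3
          omega
        set s := t with hs_def
        have hs : (a i : QuaternionGroup n) ^ s = a i' := ht
        have hmem' : ((Multiplicative.ofAdd 1, a i') : Z2 × QuaternionGroup n) ∈
            zpowers ((Multiplicative.ofAdd 1, a i) : Z2 × QuaternionGroup n) :=
          ⟨s, Prod.ext (Z2.zpow_odd _ hsodd) hs⟩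
        have hle : zpowers ((Multiplicative.ofAdd 1, a i') : Z2 × QuaternionGroup n) ≤
            zpowers ((Multiplicative.ofAdd 1, a i) : Z2 × QuaternionGroup n) :=
          zpowers_le.2 hmem'
        exact (Subgroup.eq_of_le_of_card_ge hle hcard.le).symm
  calc Nat.card {H : Subgroup (Z2 × QuaternionGroup n) // IsCyclic H ∧ H ≤ Rsub n}
      ≤ Nat.card (Fin (e + 3) × Prop × Prop) := Nat.card_le_card_of_injective Φ hinj
    _ = 4 * (e + 3) := by
      rw [Nat.card_prod, Nat.card_prod, Nat.card_congr Equiv.propEquivBool]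
      simp [Nat.card_eq_fintype_card]
      ring
end CD

section E
open Subgroup QuaternionGroup Pointwise
variable {n : ℕ} [NeZero n]

lemma xx_perm_cond {b c : Z2} {i j : ZMod (2 * n)}
    (hperm : (zpowers ((b, xa i) : Z2 × QuaternionGroup n) : Set (Z2 × QuaternionGroup n)) *
        (zpowers ((c, xa j) : Z2 × QuaternionGroup n) : Set (Z2 × QuaternionGroup n))
      = (zpowers ((c, xa j) : Z2 × QuaternionGroup n) : Set (Z2 × QuaternionGroup n)) *
        (zpowers ((b, xa i) : Z2 × QuaternionGroup n) : Set (Z2 × QuaternionGroup n))) :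
    2 * (i - j) = 0 ∨ 2 * (i - j) = (n : ZMod (2 * n)) := by
  have hnn := n_add_n (n := n)
  have hw : ((b, xa i) : Z2 × QuaternionGroup n) * (c, xa j) ∈
      (zpowers ((c, xa j) : Z2 × QuaternionGroup n) : Set (Z2 × QuaternionGroup n)) *
        (zpowers ((b, xa i) : Z2 × QuaternionGroup n) : Set (Z2 × QuaternionGroup n)) := by
    rw [← hperm]
    exact Set.mul_mem_mul (mem_zpowers _) (mem_zpowers _)
  obtain ⟨k, hkmem, h, hhmem, hkh⟩ := hw
  have hK := mem_zpowers_xa_pair (SetLike.mem_coe.1 hkmem)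
  have hH := mem_zpowers_xa_pair (SetLike.mem_coe.1 hhmem)
  have hsnd := congrArg Prod.snd hkh
  rcases hK with rfl | rfl | rfl | rfl <;> rcases hH with rfl | rfl | rfl | rfl <;>
      simp only [Prod.snd_mul, Prod.fst_mul, Prod.snd_one, Prod.fst_one, one_mul, mul_one,
        one_def, a_mul_a, a_mul_xa, xa_mul_a, xa_mul_xa] at hsnd <;>
    first
      | simp only [reduceCtorEq] at hsnd
      | (injection hsnd with h'; exact Or.inl (by linear_combination 2*h' ))
      | (injection hsnd with h'; exact Or.inl (by linear_combination 2*h' + hnn))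
      | (injection hsnd with h'; exact Or.inl (by linear_combination 2*h' - hnn))
      | (injection hsnd with h'; exact Or.inl (by linear_combination -2*h' ))
      | (injection hsnd with h'; exact Or.inl (by linear_combination -2*h' + hnn))
      | (injection hsnd with h'; exact Or.inl (by linear_combination -2*h' - hnn))
      | (injection hsnd with h'; exact Or.inl (by linear_combination h' ))
      | (injection hsnd with h'; exact Or.inl (by linear_combination h' + hnn))
      | (injection hsnd with h'; exact Or.inl (by linear_combination h' - hnn))
      | (injection hsnd with h'; exact Or.inl (by linear_combination -h' ))
      | (injection hsnd with h'; exact Or.inl (by linear_combination -h' + hnn))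
      | (injection hsnd with h'; exact Or.inl (by linear_combination -h' - hnn))
      | (injection hsnd with h'; exact Or.inr (by linear_combination 2*h' ))
      | (injection hsnd with h'; exact Or.inr (by linear_combination 2*h' + hnn))
      | (injection hsnd with h'; exact Or.inr (by linear_combination 2*h' - hnn))
      | (injection hsnd with h'; exact Or.inr (by linear_combination -2*h' ))
      | (injection hsnd with h'; exact Or.inr (by linear_combination -2*h' + hnn))
      | (injection hsnd with h'; exact Or.inr (by linear_combination -2*h' - hnn))
      | (injection hsnd with h'; exact Or.inr (by linear_combination h' ))
      | (injection hsnd with h'; exact Or.inr (by linear_combination h' + hnn))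
      | (injection hsnd with h'; exact Or.inr (by linear_combination h' - hnn))
      | (injection hsnd with h'; exact Or.inr (by linear_combination -h' ))
      | (injection hsnd with h'; exact Or.inr (by linear_combination -h' + hnn))
      | (injection hsnd with h'; exact Or.inr (by linear_combination -h' - hnn))
end E

section F
open Subgroup QuaternionGroup Pointwise

lemma isCyclic_zpowers {G : Type*} [Group G] (g : G) : IsCyclic (zpowers g) :=
  ⟨⟨⟨g, mem_zpowers g⟩, fun ⟨x, hx⟩ => by
    obtain ⟨k, hk⟩ := hx
    exact ⟨k, Subtype.ext (by simpa using hk)⟩⟩⟩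

variable {n : ℕ} [NeZero n]

lemma val_n : ((n : ZMod (2 * n))).val = n :=
  ZMod.val_cast_of_lt (by have := NeZero.pos n; omega)

lemma card_cyclicS_ge :
    n ≤ Nat.card {H : Subgroup (Z2 × QuaternionGroup n) // IsCyclic H} := by
  have hf : Function.Injective (fun k : Fin n =>
      (⟨zpowers (((1 : Z2), xa ((k : ℕ) : ZMod (2 * n))) : Z2 × QuaternionGroup n),
        _root_.isCyclic_zpowers _⟩ : {H : Subgroup (Z2 × QuaternionGroup n) // IsCyclic H})) := by
    intro k l h
    have h' : zpowers (((1 : Z2), xa ((k : ℕ) : ZMod (2 * n))) : Z2 × QuaternionGroup n) =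
        zpowers (((1 : Z2), xa ((l : ℕ) : ZMod (2 * n))) : Z2 × QuaternionGroup n) :=
      congrArg Subtype.val h
    have hmem : (((1 : Z2), xa ((l : ℕ) : ZMod (2 * n))) : Z2 × QuaternionGroup n) ∈
        zpowers (((1 : Z2), xa ((k : ℕ) : ZMod (2 * n))) : Z2 × QuaternionGroup n) := by
      rw [h']; exact mem_zpowers _
    have hkv : (((k : ℕ) : ZMod (2 * n))).val = (k : ℕ) :=
      ZMod.val_cast_of_lt (by have := k.2; omega)
    have hlv : (((l : ℕ) : ZMod (2 * n))).val = (l : ℕ) :=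
      ZMod.val_cast_of_lt (by have := l.2; omega)
    rcases mem_zpowers_xa_pair hmem with h1 | h1 | h1 | h1
    · exfalso
      have h2 : xa ((l : ℕ) : ZMod (2 * n)) = a 0 := congrArg Prod.snd h1
      cases h2
    · have := congrArg Prod.snd h1
      rw [xa.injEq] at this
      apply Fin.ext
      rw [← hlv, this, hkv]
    · exfalso
      have h2 : xa ((l : ℕ) : ZMod (2 * n)) = a (n : ZMod (2 * n)) := congrArg Prod.snd h1
      simp at h2
    · exfalso
      have h2 := congrArg Prod.snd h1
      rw [xa.injEq] at h2
      have hval : (((k : ℕ) : ZMod (2 * n)) + (n : ZMod (2 * n))).val = (k : ℕ) + n := by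
        rw [ZMod.val_add_of_lt]
        · rw [hkv, val_n]
        · rw [hkv, val_n]; have := k.2; omega
      have := l.2
      have := k.2
      rw [h2] at hlv
      omega
  calc n = Nat.card (Fin n) := by simp
  _ ≤ _ := Nat.card_le_card_of_injective _ hf

lemma exists_xa_gen (H : Subgroup (Z2 × QuaternionGroup n)) (h : IsCyclic H)
    (hn : ¬ H ≤ Rsub n) :
    ∃ bi : Z2 × ZMod (2 * n), H = zpowers ((bi.1, xa bi.2) : Z2 × QuaternionGroup n) := by
  rcases classify H h with h1 | ⟨b, i, rfl⟩
  · exact absurd h1 hn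
  · exact ⟨(b, i), rfl⟩

noncomputable def xgen (x : {H : Subgroup (Z2 × QuaternionGroup n) // IsCyclic H ∧ ¬ H ≤ Rsub n}) :
    Z2 × ZMod (2 * n) :=
  (exists_xa_gen x.1 x.2.1 x.2.2).choose

lemma xgen_spec (x : {H : Subgroup (Z2 × QuaternionGroup n) // IsCyclic H ∧ ¬ H ≤ Rsub n}) :
    (x : Subgroup (Z2 × QuaternionGroup n)) = zpowers (((xgen x).1, xa (xgen x).2) :
      Z2 × QuaternionGroup n) :=
  (exists_xa_gen x.1 x.2.1 x.2.2).choose_spec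

lemma card_cyclicX_le :
    Nat.card {H : Subgroup (Z2 × QuaternionGroup n) // IsCyclic H ∧ ¬ H ≤ Rsub n} ≤ 4 * n := by
  have hinj : Function.Injective (xgen (n := n)) := by
    intro x y h
    apply Subtype.ext
    rw [xgen_spec x, xgen_spec y, h]
  calc Nat.card {H : Subgroup (Z2 × QuaternionGroup n) // IsCyclic H ∧ ¬ H ≤ Rsub n}
      ≤ Nat.card (Z2 × ZMod (2 * n)) := Nat.card_le_card_of_injective _ hinj
  _ = 4 * n := by
      rw [Nat.card_prod]
      simp [Nat.card_eq_fintype_card]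
      ring
end F

section G
open Subgroup QuaternionGroup Pointwise

variable {n : ℕ} [NeZero n]

lemma div_lt_four (e : ℕ) (hne : 2 * n = 2 ^ e) (z : ZMod (2 * n)) :
    z.val / 2 ^ (e - 2) < 4 := by
  have hz : z.val < 2 * n := z.val_lt
  rw [Nat.div_lt_iff_lt_mul (Nat.pow_pos (by norm_num))]
  have h4 : 2 ^ (e - 2) * 4 ≥ 2 ^ e := by
    rcases Nat.lt_or_ge e 2 with h | h
    · interval_cases e <;> simp
    · have h2 : e - 2 + 2 = e := by omega
      have h3 : 2 ^ (e - 2) * 4 = 2 ^ e := by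
        rw [← h2, pow_add]; norm_num
      omega
  omega

lemma key2 (e : ℕ) (he : 2 ≤ e) (hne : 2 * n = 2 ^ e) (x y : ZMod (2 * n))
    (hx : 2 * x = 0 ∨ 2 * x = (n : ZMod (2 * n)))
    (hy : 2 * y = 0 ∨ 2 * y = (n : ZMod (2 * n)))
    (hxy : x.val / 2 ^ (e - 2) = y.val / 2 ^ (e - 2)) : x = y := by
  have hdvd : ∀ z : ZMod (2 * n), (2 * z = 0 ∨ 2 * z = (n : ZMod (2 * n))) →
      2 ^ (e - 2) ∣ z.val := by
    intro z hz
    have h4 : (4 : ZMod (2 * n)) * z = 0 := by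
      rcases hz with h | h
      · calc (4 : ZMod (2*n)) * z = 2 * (2 * z) := by ring
        _ = 0 := by rw [h, mul_zero]
      · have hnn := n_add_n (n := n)
        calc (4 : ZMod (2*n)) * z = 2 * (2 * z) := by ring
        _ = 2 * (n : ZMod (2 * n)) := by rw [h]
        _ = 0 := by linear_combination hnn
    have hcast : (((4 * z.val : ℕ)) : ZMod (2 * n)) = 0 := by
      push_cast
      rw [ZMod.natCast_zmod_val]
      exact h4
    have hdvd4 : 2 * n ∣ 4 * z.val := (ZMod.natCast_eq_zero_iff _ _).1 hcast
    have hsplit : 2 ^ e = 4 * 2 ^ (e - 2) := by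
      have h2 : e - 2 + 2 = e := by omega
      calc 2 ^ e = 2 ^ (e - 2 + 2) := by rw [h2]
      _ = 4 * 2 ^ (e - 2) := by rw [pow_add]; ring
    have hdvd4' : 4 * 2 ^ (e - 2) ∣ 4 * z.val := by
      rw [← hsplit, ← hne]; exact hdvd4
    exact (Nat.mul_dvd_mul_iff_left (by norm_num : 0 < 4)).1 hdvd4'
  have hxv := Nat.div_mul_cancel (hdvd x hx)
  have hyv := Nat.div_mul_cancel (hdvd y hy)
  have : x.val = y.val := by rw [← hxv, ← hyv, hxy]
  exact ZMod.val_injective _ this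

lemma perm_flip {i j : ZMod (2 * n)}
    (h : 2 * (i - j) = 0 ∨ 2 * (i - j) = (n : ZMod (2 * n))) :
    2 * (j - i) = 0 ∨ 2 * (j - i) = (n : ZMod (2 * n)) := by
  have hnn := n_add_n (n := n)
  rcases h with h | h
  · exact Or.inl (by linear_combination -h)
  · exact Or.inr (by linear_combination -h - hnn)

lemma main_card_bound (e : ℕ) (he : 2 ≤ e) (hne : 2 * n = 2 ^ e) :
    Nat.card {p : Subgroup (Z2 × QuaternionGroup n) × Subgroup (Z2 × QuaternionGroup n) //
      IsCyclic p.1 ∧ IsCyclic p.2 ∧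
        (p.1 : Set (Z2 × QuaternionGroup n)) * (p.2 : Set (Z2 × QuaternionGroup n)) =
          (p.2 : Set (Z2 × QuaternionGroup n)) * (p.1 : Set (Z2 × QuaternionGroup n))}
    ≤ 4 * (e + 3) * Nat.card {H : Subgroup (Z2 × QuaternionGroup n) // IsCyclic H}
      + Nat.card {H : Subgroup (Z2 × QuaternionGroup n) // IsCyclic H} * (4 * (e + 3))
      + 4 * n * 8 := by
  classical
  set Q := Z2 × QuaternionGroup n with hQ
  set S := {H : Subgroup Q // IsCyclic H}
  set R' := {H : Subgroup Q // IsCyclic H ∧ H ≤ Rsub n}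
  set X' := {H : Subgroup Q // IsCyclic H ∧ ¬ H ≤ Rsub n}
  set P := {p : Subgroup Q × Subgroup Q //
      IsCyclic p.1 ∧ IsCyclic p.2 ∧
        (p.1 : Set Q) * (p.2 : Set Q) = (p.2 : Set Q) * (p.1 : Set Q)} with hP
  set F : P → (R' × S) ⊕ ((S × R') ⊕ (X' × (Z2 × Fin 4))) := fun p =>
    if h1 : p.1.1 ≤ Rsub n then Sum.inl (⟨p.1.1, p.2.1, h1⟩, ⟨p.1.2, p.2.2.1⟩)
    else if h2 : p.1.2 ≤ Rsub n then Sum.inr (Sum.inl (⟨p.1.1, p.2.1⟩, ⟨p.1.2, p.2.2.1, h2⟩))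
    else Sum.inr (Sum.inr (⟨⟨p.1.1, p.2.1, h1⟩,
      (xgen ⟨p.1.2, p.2.2.1, h2⟩).1,
      ⟨((xgen ⟨p.1.2, p.2.2.1, h2⟩).2 - (xgen ⟨p.1.1, p.2.1, h1⟩).2).val / 2 ^ (e - 2),
        div_lt_four e hne _⟩⟩)) with hF
  have hinj : Function.Injective F := by
    rintro p q h
    simp only [hF] at h
    by_cases hp1 : p.1.1 ≤ Rsub n
    · by_cases hq1 : q.1.1 ≤ Rsub n
      · rw [dif_pos hp1, dif_pos hq1] at h
        injection h with h'
        have h1 := congrArg Subtype.val (congrArg Prod.fst h')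
        have h2 := congrArg Subtype.val (congrArg Prod.snd h')
        exact Subtype.ext (Prod.ext h1 h2)
      · rw [dif_pos hp1] at h
        by_cases hq2 : q.1.2 ≤ Rsub n
        · rw [dif_neg hq1, dif_pos hq2] at h; cases h
        · rw [dif_neg hq1, dif_neg hq2] at h; cases h
    · by_cases hq1 : q.1.1 ≤ Rsub n
      · rw [dif_pos hq1] at h
        by_cases hp2 : p.1.2 ≤ Rsub n
        · rw [dif_neg hp1, dif_pos hp2] at h; cases h
        · rw [dif_neg hp1, dif_neg hp2] at h; cases h
      · by_cases hp2 : p.1.2 ≤ Rsub n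
        · by_cases hq2 : q.1.2 ≤ Rsub n
          · rw [dif_neg hp1, dif_neg hq1, dif_pos hp2, dif_pos hq2] at h
            injection h with h'
            injection h' with h''
            have h1 := congrArg Subtype.val (congrArg Prod.fst h'')
            have h2 := congrArg Subtype.val (congrArg Prod.snd h'')
            exact Subtype.ext (Prod.ext h1 h2)
          · rw [dif_neg hp1, dif_neg hq1, dif_pos hp2, dif_neg hq2] at h
            injection h with h'
            cases h'
        · by_cases hq2 : q.1.2 ≤ Rsub n
          · rw [dif_neg hp1, dif_neg hq1, dif_neg hp2, dif_pos hq2] at h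
            injection h with h'
            cases h'
          · rw [dif_neg hp1, dif_neg hq1, dif_neg hp2, dif_neg hq2] at h
            injection h with h'
            injection h' with h''
            have h11s := congrArg Prod.fst h''
            have hsnd := congrArg Prod.snd h''
            have hc := congrArg Prod.fst hsnd
            have hidx := congrArg Fin.val (congrArg Prod.snd hsnd)
            simp only at h11s hc hidx
            have h11 := congrArg Subtype.val h11s
            have hgen1 : xgen (⟨p.1.1, p.2.1, hp1⟩ : X') = xgen ⟨q.1.1, q.2.1, hq1⟩ :=
              congrArg xgen h11s
            have hcondp := xx_perm_cond (b := (xgen (⟨p.1.1, p.2.1, hp1⟩ : X')).1)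
              (c := (xgen (⟨p.1.2, p.2.2.1, hp2⟩ : X')).1)
              (i := (xgen (⟨p.1.1, p.2.1, hp1⟩ : X')).2)
              (j := (xgen (⟨p.1.2, p.2.2.1, hp2⟩ : X')).2) (by
                rw [← xgen_spec ⟨p.1.1, p.2.1, hp1⟩, ← xgen_spec ⟨p.1.2, p.2.2.1, hp2⟩]
                exact p.2.2.2)
            have hcondq := xx_perm_cond (b := (xgen (⟨q.1.1, q.2.1, hq1⟩ : X')).1)
              (c := (xgen (⟨q.1.2, q.2.2.1, hq2⟩ : X')).1)
              (i := (xgen (⟨q.1.1, q.2.1, hq1⟩ : X')).2)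
              (j := (xgen (⟨q.1.2, q.2.2.1, hq2⟩ : X')).2) (by
                rw [← xgen_spec ⟨q.1.1, q.2.1, hq1⟩, ← xgen_spec ⟨q.1.2, q.2.2.1, hq2⟩]
                exact q.2.2.2)
            rw [hgen1] at hcondp hidx
            have hj := key2 e he hne _ _ (perm_flip hcondp) (perm_flip hcondq) hidx
            have hj' : (xgen (⟨p.1.2, p.2.2.1, hp2⟩ : X')).2
                = (xgen (⟨q.1.2, q.2.2.1, hq2⟩ : X')).2 := by
              have := sub_left_inj.1 hj
              exact this
            have e1 : p.1.2 = zpowers (((xgen (⟨p.1.2, p.2.2.1, hp2⟩ : X')).1,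
                xa (xgen (⟨p.1.2, p.2.2.1, hp2⟩ : X')).2) : Q) := xgen_spec ⟨p.1.2, p.2.2.1, hp2⟩
            have e2 : q.1.2 = zpowers (((xgen (⟨q.1.2, q.2.2.1, hq2⟩ : X')).1,
                xa (xgen (⟨q.1.2, q.2.2.1, hq2⟩ : X')).2) : Q) := xgen_spec ⟨q.1.2, q.2.2.1, hq2⟩
            have hp12 : p.1.2 = q.1.2 := by rw [e1, e2, hc, hj']
            have h11' : p.1.1 = q.1.1 := h11
            exact Subtype.ext (Prod.ext h11' hp12)
  calc Nat.card P ≤ Nat.card ((R' × S) ⊕ ((S × R') ⊕ (X' × (Z2 × Fin 4)))) :=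
        Nat.card_le_card_of_injective F hinj
  _ = Nat.card R' * Nat.card S + (Nat.card S * Nat.card R' + Nat.card X' * (2 * 4)) := by
      rw [Nat.card_sum, Nat.card_sum, Nat.card_prod, Nat.card_prod, Nat.card_prod, Nat.card_prod]
      have h2 : Nat.card Z2 = 2 := by rw [Nat.card_eq_fintype_card]; rfl
      have h4 : Nat.card (Fin 4) = 4 := by simp
      rw [h2, h4]
  _ ≤ 4 * (e + 3) * Nat.card S + (Nat.card S * (4 * (e + 3)) + 4 * n * 8) := by
      have hR := card_cyclicR_le (n := n) e hne
      have hX := card_cyclicX_le (n := n)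
      gcongr
  _ = _ := by ring
end G


section Final
open Subgroup QuaternionGroup Pointwise Filter

/-- The cyclic subgroup commutativity degree of `ℤ₂ × Q_{2^{m+1}}` tends to `0` as `m → ∞`. -/
theorem csd_Z2_prod_quaternion_tendsto_zero :
    Filter.Tendsto
      (fun m : ℕ => (cyclicPermutingPairs m : ℝ) / (numCyclicSubgroups m : ℝ) ^ 2)
      Filter.atTop (nhds 0) := by
  have t1 : Tendsto (fun m : ℕ => (m : ℝ) * (1/2) ^ m) atTop (nhds 0) :=
    tendsto_self_mul_const_pow_of_lt_one (by norm_num) (by norm_num)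
  have t2 : Tendsto (fun m : ℕ => ((1:ℝ)/2) ^ m) atTop (nhds 0) :=
    tendsto_pow_atTop_nhds_zero_of_lt_one (by norm_num) (by norm_num)
  have tg : Tendsto (fun m : ℕ => (16 * (m:ℝ) + 112) * ((1:ℝ)/2) ^ m) atTop (nhds 0) := by
    have := (t1.const_mul 16).add (t2.const_mul 112)
    simp only [mul_zero, add_zero] at this
    refine this.congr (fun m => by ring)
  apply squeeze_zero' (Filter.Eventually.of_forall (fun m => by positivity))
    _ tg
  rw [Filter.eventually_atTop]
  refine ⟨3, fun m hm => ?_⟩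
  haveI : NeZero (2 ^ (m - 1)) := ⟨(Nat.pow_pos (by norm_num)).ne'⟩
  have hne : 2 * 2 ^ (m - 1) = 2 ^ m := by
    rw [← pow_succ']
    congr 1
    omega
  set N := cyclicPermutingPairs m with hN
  set T := numCyclicSubgroups m with hT
  have hNle : N ≤ 4 * (m + 3) * T + T * (4 * (m + 3)) + 4 * 2 ^ (m - 1) * 8 :=
    main_card_bound (n := 2 ^ (m - 1)) m (by omega) hne
  have hTge : 2 ^ (m - 1) ≤ T := card_cyclicS_ge (n := 2 ^ (m - 1))
  have hNT : N ≤ (8 * m + 56) * T := by nlinarith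
  -- now in ℝ
  have hTposR : (0:ℝ) < (T:ℝ) := by
    have : 0 < T := lt_of_lt_of_le (Nat.pow_pos (by norm_num)) hTge
    exact_mod_cast this
  have hTgeR : (2:ℝ) ^ (m - 1) ≤ (T:ℝ) := by exact_mod_cast hTge
  have hNTR : (N:ℝ) ≤ (8 * (m:ℝ) + 56) * T := by exact_mod_cast hNT
  have h2m : (2:ℝ) ^ m = 2 * 2 ^ (m - 1) := by
    rw [← pow_succ']
    congr 1
    omega
  have hpow : ((1:ℝ)/2) ^ m = 1 / 2 ^ m := by rw [div_pow, one_pow]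
  calc (N : ℝ) / (T : ℝ) ^ 2 ≤ ((8 * (m:ℝ) + 56) * T) / (T : ℝ) ^ 2 := by gcongr
  _ = (8 * (m:ℝ) + 56) / T := by
      rw [pow_two, mul_div_mul_right _ _ hTposR.ne']
  _ ≤ (8 * (m:ℝ) + 56) / 2 ^ (m - 1) := by gcongr
  _ = (16 * (m:ℝ) + 112) * ((1:ℝ)/2) ^ m := by
      rw [hpow, mul_one_div, h2m]
      rw [div_eq_div_iff (by positivity) (by positivity)]
      ring
end Final
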